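/- Let x^(1),…,x^(n) ∈ [0,1]^d and 1 ≤ s ≤ d. Suppose f ∈ F^d_TCP satisfies the interaction restriction condition of order s. Then there exists g ∈ F^{d,s}_TC such that g(x^(i)) = f(x^(i)) for all i = 1,…,n. -/

import Mathlib

open MeasureTheory ProbabilityTheory

noncomputable section

/-- The unit cube `[0,1]^ι` inside `ι → ℝ`. -/
def unitCube (ι : Type*) : Set (ι → ℝ) := Set.univ.pi fun _ => Set.Icc (0 : ℝ) 1

/-- The (tensor-product) divided difference of `f` of order `p` at the points `x`. -/
def mvDivDiff {ι : Type*} [Fintype ι] [DecidableEq ι] (f : (ι → ℝ) → ℝ) (p : ι → ℕ)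
    (x : (k : ι) → Fin (p k + 1) → ℝ) : ℝ :=
  ∑ i : (k : ι) → Fin (p k + 1),
    f (fun k => x k (i k)) /
      ∏ k, ∏ j ∈ Finset.univ.erase (i k), (x k (i k) - x k j)

/-- `F^d_TCP`: total concavity in the sense of Popoviciu, i.e. all divided differences
of order `p ∈ {0,1,2}^d` with `max_k p_k = 2` are nonpositive. -/
def MemTCP (d : ℕ) (f : (Fin d → ℝ) → ℝ) : Prop :=
  ∀ p : Fin d → ℕ, (∀ k, p k ≤ 2) → (∃ k, p k = 2) →
    ∀ x : (k : Fin d) → Fin (p k + 1) → ℝ,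
      (∀ k, StrictMono (x k)) → (∀ k j, x k j ∈ Set.Icc (0 : ℝ) 1) →
      mvDivDiff f p x ≤ 0

/-- The collection of subsets `S ⊆ [d]` with `1 ≤ |S| ≤ s`. -/
def smallSets (d s : ℕ) : Finset (Finset (Fin d)) :=
  Finset.univ.filter fun S => 1 ≤ S.card ∧ S.card ≤ s

/-- The set `[0,1)^{|S|} \ {0}`, viewed inside `Fin d → ℝ` (coordinates in `S`). -/
def tcSupport (d : ℕ) (S : Finset (Fin d)) : Set (Fin d → ℝ) :=
  {t | (∀ j ∈ S, t j ∈ Set.Ico (0 : ℝ) 1) ∧ ∃ j ∈ S, t j ≠ 0}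

/-- A representation `(β₀, (β_S), (ν_S))` of a totally concave function:
a constant, coefficients for the multilinear terms, and finite Borel measures
`ν_S` on `[0,1)^{|S|} \ {0}`. -/
structure TCRep (d : ℕ) where
  β0 : ℝ
  β : Finset (Fin d) → ℝ
  ν : Finset (Fin d) → Measure (Fin d → ℝ)
  finite : ∀ S, IsFiniteMeasure (ν S)
  support : ∀ S, ν S (tcSupport d S)ᶜ = 0

/-- The function represented by `r`, keeping interactions of order at most `s`. -/
def TCRep.toFun {d : ℕ} (s : ℕ) (r : TCRep d) (x : Fin d → ℝ) : ℝ :=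
  r.β0 + ∑ S ∈ smallSets d s, r.β S * ∏ j ∈ S, x j
    - ∑ S ∈ smallSets d s, ∫ t, (∏ j ∈ S, max (x j - t j) 0) ∂(r.ν S)

/-- The total size `V` of the measures in the representation `r`. -/
def TCRep.V {d : ℕ} (s : ℕ) (r : TCRep d) : ℝ :=
  ∑ S ∈ smallSets d s, (r.ν S Set.univ).toReal

/-- Membership in the class `F^{d,s}_TC` of totally concave functions on `[0,1]^d`
with interactions of order at most `s`. -/
def MemTC (d s : ℕ) (f : (Fin d → ℝ) → ℝ) : Prop :=
  ∃ r : TCRep d, ∀ x ∈ unitCube (Fin d), f x = r.toFun s x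

/-- Membership in `F^{d,s}_TC` via a representation of total measure size at most `Vbd`. -/
def MemTCV (d s : ℕ) (Vbd : ℝ) (f : (Fin d → ℝ) → ℝ) : Prop :=
  ∃ r : TCRep d, (∀ x ∈ unitCube (Fin d), f x = r.toFun s x) ∧ r.V s ≤ Vbd

/-- The interaction restriction condition of order `s`. -/
def InteractionRestriction (d s : ℕ) (f : (Fin d → ℝ) → ℝ) : Prop :=
  ∀ S : Finset (Fin d), s < S.card →
    ∀ x y : Fin d → ℝ, (∀ k ∈ S, 0 ≤ x k ∧ x k < y k ∧ y k ≤ 1) →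
      ∑ R ∈ S.powerset, (-1 : ℝ) ^ (S.card - R.card) *
        f (fun k => if k ∈ R then y k else if k ∈ S then x k else 0) = 0

/-- The regularity condition at `0` for the subset `S`: the relevant divided differences
near the origin are bounded above. -/
def RegZero (d : ℕ) (f : (Fin d → ℝ) → ℝ) (S : Finset (Fin d)) : Prop :=
  ∃ M : ℝ, ∀ t : Fin d → ℝ, (∀ k ∈ S, t k ∈ Set.Ioc (0 : ℝ) 1) →
    (∏ k ∈ S, t k)⁻¹ *
      ∑ R ∈ S.powerset, (-1 : ℝ) ^ (S.card - R.card) *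
        f (fun k => if k ∈ R then t k else 0) ≤ M

/-- The regularity condition at `1` for the subset `S`: the relevant divided differences
near the far corner are bounded below. -/
def RegOne (d : ℕ) (f : (Fin d → ℝ) → ℝ) (S : Finset (Fin d)) : Prop :=
  ∃ M : ℝ, ∀ t : Fin d → ℝ, (∀ k ∈ S, t k ∈ Set.Ico (0 : ℝ) 1) →
    M ≤ (∏ k ∈ S, (1 - t k))⁻¹ *
      ∑ R ∈ S.powerset, (-1 : ℝ) ^ (S.card - R.card) *
        f (fun k => if k ∈ R then 1 else if k ∈ S then t k else 0)

/-- Entire monotonicity: all divided differences of order `p ∈ {0,1}^ι \ {0}`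
are nonnegative. -/
def EntirelyMonotone {ι : Type*} [Fintype ι] [DecidableEq ι] (g : (ι → ℝ) → ℝ) : Prop :=
  ∀ p : ι → ℕ, (∀ k, p k ≤ 1) → (∃ k, p k = 1) →
    ∀ x : (k : ι) → Fin (p k + 1) → ℝ,
      (∀ k, StrictMono (x k)) → (∀ k j, x k j ∈ Set.Icc (0 : ℝ) 1) →
      0 ≤ mvDivDiff g p x

/-- Coordinate-wise right-continuity on the unit cube. -/
def CwRightCont {ι : Type*} [DecidableEq ι] (g : (ι → ℝ) → ℝ) : Prop :=
  ∀ x : ι → ℝ, (∀ k, x k ∈ Set.Icc (0 : ℝ) 1) → ∀ k : ι,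
    ContinuousWithinAt (fun u => g (Function.update x k u)) (Set.Icc (x k) 1) (x k)

/-- Coordinate-wise left-continuity at points of the cube whose `k`-th coordinate is `1`,
with respect to that coordinate. -/
def CwLeftContAtOne {ι : Type*} [DecidableEq ι] (g : (ι → ℝ) → ℝ) : Prop :=
  ∀ x : ι → ℝ, (∀ k, x k ∈ Set.Icc (0 : ℝ) 1) → ∀ k : ι, x k = 1 →
    ContinuousWithinAt (fun u => g (Function.update x k u)) (Set.Icc (0 : ℝ) 1) (x k)

/-- `t` belongs to the lattice `L_S` generated by the design points `x`
(extended by `0` in the coordinates outside `S`). -/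
def InLattice {d n : ℕ} (x : Fin n → Fin d → ℝ) (S : Finset (Fin d)) (t : Fin d → ℝ) : Prop :=
  (∀ j ∈ S, t j = 0 ∨ ∃ i, t j = x i j) ∧ (∃ j ∈ S, t j ≠ 0) ∧ ∀ j ∉ S, t j = 0

/-- The finite-dimensional class of functions built from hinge functions with knots in the
lattices `L_S` (nonnegative coefficients on the hinge terms). -/
def MemDiscrete (d s : ℕ) {n : ℕ} (x : Fin n → Fin d → ℝ) (f : (Fin d → ℝ) → ℝ) : Prop :=
  ∃ (β0 : ℝ) (β : Finset (Fin d) → ℝ)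
    (T : Finset (Fin d) → Finset (Fin d → ℝ)) (c : Finset (Fin d) → (Fin d → ℝ) → ℝ),
    (∀ S ∈ smallSets d s, ∀ t ∈ T S, InLattice x S t) ∧
    (∀ S ∈ smallSets d s, ∀ t ∈ T S, 0 ≤ c S t) ∧
    ∀ z ∈ unitCube (Fin d),
      f z = β0 + ∑ S ∈ smallSets d s, β S * ∏ j ∈ S, z j
        - ∑ S ∈ smallSets d s, ∑ t ∈ T S, c S t * ∏ j ∈ S, max (z j - t j) 0

/-- The point of the equally spaced lattice design indexed by `i`. -/
def latticePoint {d : ℕ} (nk : Fin d → ℕ) (i : ∀ k, Fin (nk k)) : Fin d → ℝ :=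
  fun k => (i k : ℝ) / (nk k)

/-- `V_design(f)`: the infimum of `V(g)` over all totally concave `g` agreeing with `f`
at the design points. -/
def Vdesign (d : ℕ) {ι : Type*} (pts : ι → Fin d → ℝ) (f : (Fin d → ℝ) → ℝ) : ℝ :=
  sInf {v : ℝ | ∃ r : TCRep d, (∀ i, r.toFun d (pts i) = f (pts i)) ∧ v = r.V d}

/-- `f` is a continuous rectangular piecewise multi-affine function (interaction order `≤ s`)
with respect to an axis-aligned grid partition of `[0,1]^d` into `m` rectangles. -/
def IsRectPartition (d s : ℕ) (f : (Fin d → ℝ) → ℝ) (m : ℕ) : Prop :=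
  ContinuousOn f (unitCube (Fin d)) ∧
  ∃ (mk : Fin d → ℕ) (u : (k : Fin d) → Fin (mk k + 1) → ℝ),
    (∀ k, StrictMono (u k)) ∧ (∀ k, u k 0 = 0) ∧ (∀ k, u k (Fin.last (mk k)) = 1) ∧
    m = ∏ k, mk k ∧
    ∀ j : (k : Fin d) → Fin (mk k),
      ∃ (c0 : ℝ) (c : Finset (Fin d) → ℝ),
        ∀ x : Fin d → ℝ,
          (∀ k, x k ∈ Set.Icc (u k (j k).castSucc) (u k (j k).succ)) →
          f x = c0 + ∑ S ∈ smallSets d s, c S * ∏ k ∈ S, x k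


namespace TCAux

open Finset Finsupp

variable {d : ℕ}

def pairOn (T : Fin d → Finset ℝ) (μ : Fin d → ℝ →₀ ℝ) (f : (Fin d → ℝ) → ℝ) : ℝ :=
  ∑ z ∈ Fintype.piFinset T, (∏ k, μ k (z k)) * f z

def pair (μ : Fin d → ℝ →₀ ℝ) (f : (Fin d → ℝ) → ℝ) : ℝ :=
  pairOn (fun k => (μ k).support) μ f

lemma pairOn_mono {T T' : Fin d → Finset ℝ} {μ : Fin d → ℝ →₀ ℝ} {f : (Fin d → ℝ) → ℝ}
    (hTT' : ∀ k, T k ⊆ T' k) (hT : ∀ k, (μ k).support ⊆ T k) :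
    pairOn T μ f = pairOn T' μ f := by
  unfold pairOn
  refine (Finset.sum_subset (f := fun z => (∏ k, μ k (z k)) * f z)
    (Fintype.piFinset_subset _ _ hTT') ?_)
  intro z hz hz'
  have : ∃ k, z k ∉ T k := by
    by_contra h
    push_neg at h
    exact hz' (by simpa [Fintype.mem_piFinset] using h)
  obtain ⟨k, hk⟩ := this
  have : μ k (z k) = 0 := Finsupp.notMem_support_iff.mp fun h => hk (hT k h)
  rw [Finset.prod_eq_zero (Finset.mem_univ k) this, zero_mul]

lemma pair_eq_pairOn {T : Fin d → Finset ℝ} {μ : Fin d → ℝ →₀ ℝ} {f : (Fin d → ℝ) → ℝ}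
    (hT : ∀ k, (μ k).support ⊆ T k) : pair μ f = pairOn T μ f :=
  pairOn_mono hT (fun _ => Finset.Subset.refl _)

lemma pair_single (w : Fin d → ℝ) (f : (Fin d → ℝ) → ℝ) :
    pair (fun k => Finsupp.single (w k) 1) f = f w := by
  rw [pair_eq_pairOn (T := fun k => {w k}) (fun k => Finsupp.support_single_subset)]
  have h : Fintype.piFinset (fun k => ({w k} : Finset ℝ)) = {w} := by
    ext z
    simp [Fintype.mem_piFinset, funext_iff]
  rw [pairOn, h, Finset.sum_singleton]
  simp

lemma pair_smul (r : Fin d → ℝ) (ν : Fin d → ℝ →₀ ℝ) (f : (Fin d → ℝ) → ℝ) :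
    pair (fun k => r k • ν k) f = (∏ k, r k) * pair ν f := by
  rw [pair_eq_pairOn (T := fun k => (ν k).support) (fun k => Finsupp.support_smul)]
  rw [pair, pairOn, pairOn, Finset.mul_sum]
  refine Finset.sum_congr rfl fun z _ => ?_
  simp only [Finsupp.smul_apply, smul_eq_mul]
  rw [Finset.prod_mul_distrib]
  ring

lemma pair_sum (t : Fin d → ℕ) (ρ : (k : Fin d) → ℕ → ℝ →₀ ℝ) (f : (Fin d → ℝ) → ℝ) :
    pair (fun k => ∑ j ∈ Finset.range (t k), ρ k j) f
      = ∑ c ∈ Fintype.piFinset (fun k => Finset.range (t k)),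
          pair (fun k => ρ k (c k)) f := by
  set T : Fin d → Finset ℝ := fun k => (Finset.range (t k)).biUnion (fun j => (ρ k j).support)
  have hT : ∀ k, ((∑ j ∈ Finset.range (t k), ρ k j).support) ⊆ T k := fun k =>
    Finsupp.support_finset_sum
  rw [pair_eq_pairOn hT, pairOn]
  have : ∀ z : Fin d → ℝ,
      (∏ k, (∑ j ∈ Finset.range (t k), ρ k j) (z k)) * f z
      = ∑ c ∈ Fintype.piFinset (fun k => Finset.range (t k)),
          (∏ k, ρ k (c k) (z k)) * f z := by
    intro z
    rw [← Finset.sum_mul]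
    congr 1
    simp only [Finsupp.finset_sum_apply]
    rw [Finset.prod_univ_sum]
  simp_rw [this]
  rw [Finset.sum_comm]
  refine Finset.sum_congr rfl fun c hc => ?_
  rw [pair_eq_pairOn (T := T) (fun k => Finset.subset_biUnion_of_mem
    (fun j => (ρ k j).support) (Fintype.mem_piFinset.mp hc k))]
  rfl

lemma pair_zero_slot {μ : Fin d → ℝ →₀ ℝ} (f : (Fin d → ℝ) → ℝ) (k0 : Fin d)
    (h : μ k0 = 0) : pair μ f = 0 := by
  rw [pair, pairOn]
  have : Fintype.piFinset (fun k => (μ k).support) = ∅ := by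
    ext z
    simp only [Fintype.mem_piFinset, Finset.notMem_empty, iff_false]
    push_neg
    exact ⟨k0, by simp [h]⟩
  rw [this, Finset.sum_empty]

lemma pair_update_add (μ : Fin d → ℝ →₀ ℝ) (k0 : Fin d) (ν ρ : ℝ →₀ ℝ)
    (f : (Fin d → ℝ) → ℝ) :
    pair (Function.update μ k0 (ν + ρ)) f
      = pair (Function.update μ k0 ν) f + pair (Function.update μ k0 ρ) f := by
  classical
  set T : Fin d → Finset ℝ := fun k =>
    if k = k0 then ν.support ∪ ρ.support else (μ k).support with hTdef
  have hsub : ∀ (q : ℝ →₀ ℝ), q.support ⊆ ν.support ∪ ρ.support →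
      ∀ k, ((Function.update μ k0 q) k).support ⊆ T k := by
    intro q hq k
    by_cases hk : k = k0
    · subst hk; simp [T, Function.update_self, hq]
    · simp [T, hk, Function.update_of_ne hk]
  rw [pair_eq_pairOn (hsub _ Finsupp.support_add),
      pair_eq_pairOn (hsub _ Finset.subset_union_left),
      pair_eq_pairOn (hsub _ Finset.subset_union_right)]
  rw [pairOn, pairOn, pairOn, ← Finset.sum_add_distrib]
  refine Finset.sum_congr rfl fun z _ => ?_
  have key : ∀ (q : ℝ →₀ ℝ),
      (∏ k, (Function.update μ k0 q) k (z k))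
        = q (z k0) * ∏ k ∈ Finset.univ.erase k0, μ k (z k) := by
    intro q
    rw [← Finset.mul_prod_erase Finset.univ _ (Finset.mem_univ k0)]
    rw [Function.update_self]
    congr 1
    refine Finset.prod_congr rfl fun k hk => ?_
    rw [Function.update_of_ne (Finset.ne_of_mem_erase hk)]
  rw [key, key, key, Finsupp.add_apply]
  ring

lemma pair_update_smul (μ : Fin d → ℝ →₀ ℝ) (k0 : Fin d) (c : ℝ) (ν : ℝ →₀ ℝ)
    (f : (Fin d → ℝ) → ℝ) :
    pair (Function.update μ k0 (c • ν)) f = c * pair (Function.update μ k0 ν) f := by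
  classical
  set T : Fin d → Finset ℝ := fun k => if k = k0 then ν.support else (μ k).support
  have hsub : ∀ (q : ℝ →₀ ℝ), q.support ⊆ ν.support →
      ∀ k, ((Function.update μ k0 q) k).support ⊆ T k := by
    intro q hq k
    by_cases hk : k = k0
    · subst hk; simp [T, Function.update_self, hq]
    · simp [T, hk, Function.update_of_ne hk]
  rw [pair_eq_pairOn (hsub _ Finsupp.support_smul),
      pair_eq_pairOn (hsub _ (Finset.Subset.refl _))]
  rw [pairOn, pairOn, Finset.mul_sum]
  refine Finset.sum_congr rfl fun z _ => ?_
  have key : ∀ (q : ℝ →₀ ℝ),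
      (∏ k, (Function.update μ k0 q) k (z k))
        = q (z k0) * ∏ k ∈ Finset.univ.erase k0, μ k (z k) := by
    intro q
    rw [← Finset.mul_prod_erase Finset.univ _ (Finset.mem_univ k0)]
    rw [Function.update_self]
    congr 1
    refine Finset.prod_congr rfl fun k hk => ?_
    rw [Function.update_of_ne (Finset.ne_of_mem_erase hk)]
  rw [key, key, Finsupp.smul_apply, smul_eq_mul]
  ring

def dd1 (u v : ℝ) : ℝ →₀ ℝ := Finsupp.single v (v - u)⁻¹ - Finsupp.single u (v - u)⁻¹

def ddFun (p : ℕ) (xs : Fin (p+1) → ℝ) : ℝ →₀ ℝ :=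
  ∑ i, Finsupp.single (xs i) (∏ j ∈ Finset.univ.erase i, (xs i - xs j))⁻¹

def fmass (ρ : ℝ →₀ ℝ) : ℝ := ρ.sum fun _ v => v

lemma fmass_sub (a b : ℝ →₀ ℝ) : fmass (a - b) = fmass a - fmass b :=
  Finsupp.sum_sub_index (fun _ _ _ => rfl)

lemma fmass_single (t c : ℝ) : fmass (Finsupp.single t c) = c :=
  Finsupp.sum_single_index rfl

lemma fmass_smul (c : ℝ) (a : ℝ →₀ ℝ) : fmass (c • a) = c * fmass a := by
  unfold fmass
  rw [Finsupp.sum_smul_index (fun _ => rfl), Finsupp.mul_sum]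

lemma fmass_dd1 (u v : ℝ) : fmass (dd1 u v) = 0 := by
  rw [dd1, fmass_sub, fmass_single, fmass_single, sub_self]

lemma support_dd1 (u v : ℝ) : (dd1 u v).support ⊆ {v, u} := by
  refine subset_trans Finsupp.support_sub ?_
  refine Finset.union_subset ?_ ?_
  · exact subset_trans Finsupp.support_single_subset (by simp)
  · exact subset_trans Finsupp.support_single_subset (by simp)

lemma support_ddFun (p : ℕ) (xs : Fin (p+1) → ℝ) :
    (ddFun p xs).support ⊆ Finset.image xs Finset.univ := by
  refine subset_trans Finsupp.support_finset_sum ?_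
  refine Finset.biUnion_subset.mpr fun i _ => ?_
  refine subset_trans Finsupp.support_single_subset ?_
  simp [Finset.singleton_subset_iff]

lemma ddFun_apply (p : ℕ) (xs : Fin (p+1) → ℝ) (hinj : Function.Injective xs) (i : Fin (p+1)) :
    ddFun p xs (xs i) = (∏ j ∈ Finset.univ.erase i, (xs i - xs j))⁻¹ := by
  rw [ddFun, Finsupp.finset_sum_apply]
  rw [Finset.sum_eq_single i]
  · rw [Finsupp.single_eq_same]
  · intro i' _ hne
    exact Finsupp.single_eq_of_ne' (fun h => hne (hinj h))
  · intro h
    exact absurd (Finset.mem_univ i) h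

lemma helper0 (q : ℕ) (hq : q = 0) (ys : Fin (q+1) → ℝ) (h0 : ∀ i, ys i = 0) :
    ddFun q ys = Finsupp.single 0 1 := by
  subst hq
  rw [ddFun]
  rw [Fin.sum_univ_one]
  rw [h0 0]
  congr 1
  rw [show (Finset.univ.erase (0 : Fin 1)) = ∅ by simp]
  simp

lemma helper1 (q : ℕ) (hq : q = 1) (ys : Fin (q+1) → ℝ) (u v : ℝ)
    (h0 : ys ⟨0, by omega⟩ = u) (h1 : ys ⟨1, by omega⟩ = v) :
    ddFun q ys = dd1 u v := by
  subst hq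
  rw [ddFun, Fin.sum_univ_two]
  have e0 : (Finset.univ.erase (0 : Fin 2)) = {1} := by decide
  have e1 : (Finset.univ.erase (1 : Fin 2)) = {0} := by decide
  rw [e0, e1, Finset.prod_singleton, Finset.prod_singleton]
  have hy0 : ys 0 = u := h0
  have hy1 : ys 1 = v := h1
  rw [hy0, hy1, dd1]
  rw [show (u - v)⁻¹ = -(v - u)⁻¹ by rw [← neg_sub v u, inv_neg]]
  rw [Finsupp.single_neg]
  abel

lemma helper2 (q : ℕ) (hq : q = 2) (ys : Fin (q+1) → ℝ) (u v w : ℝ)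
    (h0 : ys ⟨0, by omega⟩ = u) (h1 : ys ⟨1, by omega⟩ = v) (h2 : ys ⟨2, by omega⟩ = w)
    (huv : u < v) (hvw : v < w) :
    (w - u) • ddFun q ys = dd1 v w - dd1 u v := by
  subst hq
  have hy0 : ys 0 = u := h0
  have hy1 : ys 1 = v := h1
  have hy2 : ys 2 = w := h2
  rw [ddFun, Fin.sum_univ_three]
  have e0 : (Finset.univ.erase (0 : Fin 3)) = {1, 2} := by decide
  have e1 : (Finset.univ.erase (1 : Fin 3)) = {0, 2} := by decide
  have e2 : (Finset.univ.erase (2 : Fin 3)) = {0, 1} := by decide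
  rw [e0, e1, e2, hy0, hy1, hy2]
  have p0 : ∏ j ∈ ({1, 2} : Finset (Fin 3)), (u - ys j) = (u - v) * (u - w) := by
    rw [Finset.prod_insert (by decide), Finset.prod_singleton, hy1, hy2]
  have p1 : ∏ j ∈ ({0, 2} : Finset (Fin 3)), (v - ys j) = (v - u) * (v - w) := by
    rw [Finset.prod_insert (by decide), Finset.prod_singleton, hy0, hy2]
  have p2 : ∏ j ∈ ({0, 1} : Finset (Fin 3)), (w - ys j) = (w - u) * (w - v) := by
    rw [Finset.prod_insert (by decide), Finset.prod_singleton, hy0, hy1]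
  rw [p0, p1, p2]
  have hvu : v - u ≠ 0 := sub_ne_zero.mpr (ne_of_gt huv)
  have hwv : w - v ≠ 0 := sub_ne_zero.mpr (ne_of_gt hvw)
  have hwu : w - u ≠ 0 := sub_ne_zero.mpr (ne_of_gt (lt_trans huv hvw))
  rw [smul_add, smul_add, Finsupp.smul_single, Finsupp.smul_single, Finsupp.smul_single]
  have c0 : (w - u) • ((u - v) * (u - w))⁻¹ = (v - u)⁻¹ := by
    rw [smul_eq_mul, show (u-v)*(u-w) = (v-u)*(w-u) by ring, mul_inv,
      mul_comm ((v-u)⁻¹), ← mul_assoc, mul_inv_cancel₀ hwu, one_mul]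
  have c1 : (w - u) • ((v - u) * (v - w))⁻¹ = -((w - v)⁻¹ + (v - u)⁻¹) := by
    rw [smul_eq_mul, show (v-u)*(v-w) = -((v-u)*(w-v)) by ring, inv_neg, mul_neg, neg_inj]
    rw [inv_add_inv hwv hvu, mul_inv, show w - v + (v - u) = w - u by ring]
    rw [mul_comm ((v-u)⁻¹), mul_comm (w-v) (v-u), div_eq_mul_inv, mul_inv]
    ring
  have c2 : (w - u) • ((w - u) * (w - v))⁻¹ = (w - v)⁻¹ := by
    rw [smul_eq_mul, mul_inv, ← mul_assoc, mul_inv_cancel₀ hwu, one_mul]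
  rw [c0, c1, c2, dd1, dd1]
  rw [Finsupp.single_neg, Finsupp.single_add]
  abel
lemma pair_ddFun {d : ℕ} (f : (Fin d → ℝ) → ℝ) (p : Fin d → ℕ) (xs : ∀ k, Fin (p k + 1) → ℝ)
    (hxs : ∀ k, Function.Injective (xs k)) :
    pair (fun k => ddFun (p k) (xs k)) f = mvDivDiff f p xs := by
  rw [pair_eq_pairOn (T := fun k => Finset.image (xs k) Finset.univ)
      (fun k => support_ddFun _ _)]
  rw [pairOn, mvDivDiff]
  refine (Finset.sum_bij (fun i (_ : i ∈ Finset.univ) => fun k => xs k (i k)) ?_ ?_ ?_ ?_).symm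
  · intro i _
    simp only [Fintype.mem_piFinset]
    intro k; exact Finset.mem_image_of_mem _ (Finset.mem_univ _)
  · intro i _ i' _ h
    funext k
    exact hxs k (congrFun h k)
  · intro z hz
    have hex : ∀ k, ∃ a : Fin (p k + 1), xs k a = z k := by
      intro k
      obtain ⟨a, _, ha⟩ := Finset.mem_image.mp (Fintype.mem_piFinset.mp hz k)
      exact ⟨a, ha⟩
    choose i hi using hex
    exact ⟨i, Finset.mem_univ _, funext hi⟩
  · intro i _
    rw [div_eq_mul_inv, mul_comm]
    congr 1
    rw [← Finset.prod_inv_distrib]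
    refine Finset.prod_congr rfl fun k _ => ?_
    exact (ddFun_apply _ _ (hxs k) (i k)).symm

lemma oneD (m l : ℕ) (A : ℕ → ℝ) (hl : l ≤ m)
    (hmono : ∀ i j, i ≤ j → j ≤ m → A i ≤ A j)
    (hstrict : ∀ j, j < m → A j < A (j+1)) :
    Finsupp.single (A l) (1:ℝ) = Finsupp.single (A 0) 1 +
      ∑ j ∈ Finset.range m, (max (A l - A j) 0) •
        (dd1 (A j) (A (j+1)) - if j = 0 then 0 else dd1 (A (j-1)) (A j)) := by
  set c : ℕ → ℝ := fun j => max (A l - A j) 0 with hc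
  have step1 : ∑ j ∈ Finset.range m, c j •
      (dd1 (A j) (A (j+1)) - if j = 0 then 0 else dd1 (A (j-1)) (A j))
      = ∑ j ∈ Finset.range m, (c j - c (j+1)) • dd1 (A j) (A (j+1)) := by
    rcases Nat.eq_zero_or_pos m with hm | hm
    · subst hm; simp
    obtain ⟨m', rfl⟩ : ∃ m', m = m' + 1 := ⟨m - 1, by omega⟩
    have hcm : c (m' + 1) = 0 := by
      have hle : A l ≤ A (m' + 1) := hmono l (m'+1) hl le_rfl
      simp only [hc]
      exact max_eq_right (sub_nonpos.mpr hle)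
    have h1 : ∀ j, c j • (dd1 (A j) (A (j+1)) - (if j = 0 then 0 else dd1 (A (j-1)) (A j)))
        = c j • dd1 (A j) (A (j+1)) - c j • (if j = 0 then 0 else dd1 (A (j-1)) (A j)) :=
      fun j => smul_sub _ _ _
    have h2 : ∀ j, (c j - c (j+1)) • dd1 (A j) (A (j+1))
        = c j • dd1 (A j) (A (j+1)) - c (j+1) • dd1 (A j) (A (j+1)) :=
      fun j => sub_smul _ _ _
    simp_rw [h1, h2]
    rw [Finset.sum_sub_distrib, Finset.sum_sub_distrib]
    congr 1
    rw [Finset.sum_range_succ' (fun j => c j • (if j = 0 then 0 else dd1 (A (j-1)) (A j))) m']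
    rw [Finset.sum_range_succ (fun j => c (j+1) • dd1 (A j) (A (j+1))) m']
    rw [hcm, zero_smul, add_zero]
    simp only [Nat.add_sub_cancel, if_neg (Nat.succ_ne_zero _), if_pos rfl, if_true,
      smul_zero, add_zero]
  rw [step1]
  have step2 : ∑ j ∈ Finset.range m, (c j - c (j+1)) • dd1 (A j) (A (j+1))
      = ∑ j ∈ Finset.range m, (if j < l then
          Finsupp.single (A (j+1)) (1:ℝ) - Finsupp.single (A j) 1 else 0) := by
    refine Finset.sum_congr rfl fun j hj => ?_
    have hjm : j < m := Finset.mem_range.mp hj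
    by_cases hjl : j < l
    · rw [if_pos hjl]
      have hc1 : c j = A l - A j :=
        max_eq_left (sub_nonneg.mpr (hmono j l (by omega) hl))
      have hc2 : c (j+1) = A l - A (j+1) :=
        max_eq_left (sub_nonneg.mpr (hmono (j+1) l (by omega) hl))
      have hne : A (j+1) - A j ≠ 0 := sub_ne_zero.mpr (ne_of_gt (hstrict j hjm))
      rw [hc1, hc2, show A l - A j - (A l - A (j+1)) = A (j+1) - A j by ring]
      rw [dd1, smul_sub, Finsupp.smul_single, Finsupp.smul_single, smul_eq_mul,
        mul_inv_cancel₀ hne]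
    · rw [if_neg hjl]
      have hz1 : c j = 0 := max_eq_right (sub_nonpos.mpr (hmono l j (by omega) (by omega)))
      have hz2 : c (j+1) = 0 := max_eq_right (sub_nonpos.mpr (hmono l (j+1) (by omega) (by omega)))
      rw [hz1, hz2, sub_self, zero_smul]
  rw [step2]
  have step3 : ∑ j ∈ Finset.range m, (if j < l then
      Finsupp.single (A (j+1)) (1:ℝ) - Finsupp.single (A j) 1 else 0)
      = ∑ j ∈ Finset.range l, (Finsupp.single (A (j+1)) (1:ℝ) - Finsupp.single (A j) 1) := by
    rw [← Finset.sum_filter]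
    congr 1
    ext j
    simp only [Finset.mem_filter, Finset.mem_range]
    omega
  rw [step3, Finset.sum_range_sub (f := fun j => Finsupp.single (A j) (1:ℝ)) l]
  rw [add_sub_cancel]

lemma vanish {d s : ℕ} (f : (Fin d → ℝ) → ℝ)
    (hir : ∀ S : Finset (Fin d), s < S.card →
      ∀ x y : Fin d → ℝ, (∀ k ∈ S, 0 ≤ x k ∧ x k < y k ∧ y k ≤ 1) →
        ∑ R ∈ S.powerset, (-1 : ℝ) ^ (S.card - R.card) *
          f (fun k => if k ∈ R then y k else if k ∈ S then x k else 0) = 0)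
    (S : Finset (Fin d)) :
    ∀ (W : Finset (Fin d)), Disjoint S W → s < S.card + W.card →
    ∀ (μ : Fin d → ℝ →₀ ℝ),
      (∀ k ∈ S, fmass (μ k) = 0 ∧ ↑(μ k).support ⊆ Set.Icc (0:ℝ) 1) →
      (∀ k ∈ W, ∃ u v : ℝ, 0 ≤ u ∧ u < v ∧ v ≤ 1 ∧
          μ k = Finsupp.single v 1 - Finsupp.single u 1) →
      (∀ k, k ∉ S → k ∉ W → μ k = Finsupp.single 0 1) →
      pair μ f = 0 := by
  classical
  induction S using Finset.strongInduction with
  | _ S ih =>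
    intro W hdisj hcard μ hS hW hrest
    rcases S.eq_empty_or_nonempty with hSe | ⟨k0, hk0⟩
    · subst hSe
      simp only [Finset.card_empty, zero_add] at hcard
      choose! u v hu huv hv hμ using hW
      have hTsub : ∀ k, (μ k).support ⊆ (if k ∈ W then {u k, v k} else {0} : Finset ℝ) := by
        intro k
        by_cases hk : k ∈ W
        · rw [if_pos hk, hμ k hk]
          refine subset_trans Finsupp.support_sub (Finset.union_subset ?_ ?_)
          · exact subset_trans Finsupp.support_single_subset (by simp)
          · exact subset_trans Finsupp.support_single_subset (by simp)
        · rw [if_neg hk, hrest k (Finset.notMem_empty k) hk]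
          exact Finsupp.support_single_subset
      rw [pair_eq_pairOn hTsub]
      refine Eq.trans ?_ (hir W hcard u v (fun k hk => ⟨hu k hk, huv k hk, hv k hk⟩))
      rw [pairOn]
      refine Finset.sum_nbij' (i := fun z => W.filter (fun k => z k = v k))
        (j := fun R => fun k => if k ∈ R then v k else if k ∈ W then u k else 0)
        ?_ ?_ ?_ ?_ ?_
      · intro z _
        exact Finset.mem_powerset.mpr (Finset.filter_subset _ _)
      · intro R hR
        have hRW := Finset.mem_powerset.mp hR
        refine Fintype.mem_piFinset.mpr fun k => ?_
        by_cases hk : k ∈ W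
        · rw [if_pos hk]
          by_cases hkR : k ∈ R
          · simp [hkR]
          · simp [hkR, hk]
        · rw [if_neg hk, if_neg (fun h => hk (hRW h)), if_neg hk]
          exact Finset.mem_singleton_self 0
      · intro z hz
        funext k
        have hzk := Fintype.mem_piFinset.mp hz k
        by_cases hk : k ∈ W
        · rw [if_pos hk] at hzk
          by_cases hzv : z k = v k
          · rw [if_pos (Finset.mem_filter.mpr ⟨hk, hzv⟩)]; exact hzv.symm
          · have hnot : k ∉ Finset.filter (fun k' => z k' = v k') W :=
              fun h => hzv (Finset.mem_filter.mp h).2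
            rw [if_neg hnot, if_pos hk]
            rcases Finset.mem_insert.mp hzk with h | h
            · exact h.symm
            · exact absurd (Finset.mem_singleton.mp h) hzv
        · rw [if_neg hk] at hzk
          have hnot : k ∉ Finset.filter (fun k' => z k' = v k') W :=
            fun h => hk (Finset.filter_subset _ _ h)
          rw [if_neg hnot, if_neg hk]
          exact (Finset.mem_singleton.mp hzk).symm
      · intro R hR
        have hRW := Finset.mem_powerset.mp hR
        ext k
        dsimp only
        simp only [Finset.mem_filter]
        constructor
        · rintro ⟨hkW, hkv⟩
          by_cases hkR : k ∈ R
          · exact hkR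
          · exfalso
            rw [if_neg hkR, if_pos hkW] at hkv
            exact absurd hkv (ne_of_lt (huv k hkW))
        · intro hkR
          exact ⟨hRW hkR, by rw [if_pos hkR]⟩
      · intro z hz
        set R := W.filter (fun k => z k = v k) with hR
        have hRW : R ⊆ W := Finset.filter_subset _ _
        have hzeq : z = fun k => if k ∈ R then v k else if k ∈ W then u k else 0 := by
          funext k
          have hzk := Fintype.mem_piFinset.mp hz k
          by_cases hk : k ∈ W
          · rw [if_pos hk] at hzk
            by_cases hzv : z k = v k
            · rw [if_pos (Finset.mem_filter.mpr ⟨hk, hzv⟩)]; exact hzv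
            · have hnot : k ∉ R := fun h => hzv (Finset.mem_filter.mp h).2
              rw [if_neg hnot, if_pos hk]
              rcases Finset.mem_insert.mp hzk with h | h
              · exact h
              · exact absurd (Finset.mem_singleton.mp h) hzv
          · rw [if_neg hk] at hzk
            have hnot : k ∉ R := fun h => hk (hRW h)
            rw [if_neg hnot, if_neg hk]
            exact Finset.mem_singleton.mp hzk
        have hweight : (∏ k, μ k (z k)) = (-1 : ℝ) ^ (W.card - R.card) := by
          rw [← Finset.prod_mul_prod_compl W (fun k => μ k (z k))]
          have hout : ∀ k ∈ Wᶜ, μ k (z k) = 1 := by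
            intro k hk
            have hkW : k ∉ W := Finset.mem_compl.mp hk
            have hz0 : z k = 0 := by
              have := Fintype.mem_piFinset.mp hz k
              rw [if_neg hkW] at this
              exact Finset.mem_singleton.mp this
            rw [hrest k (Finset.notMem_empty k) hkW, hz0, Finsupp.single_eq_same]
          rw [Finset.prod_congr rfl hout, Finset.prod_const_one, mul_one]
          rw [← Finset.prod_sdiff hRW]
          have hin : ∀ k ∈ R, μ k (z k) = 1 := by
            intro k hk
            have hkW := hRW hk
            have hzv : z k = v k := (Finset.mem_filter.mp hk).2
            rw [hμ k hkW, hzv, Finsupp.sub_apply, Finsupp.single_eq_same,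
              Finsupp.single_eq_of_ne' (ne_of_lt (huv k hkW)), sub_zero]
          have hmid : ∀ k ∈ W \ R, μ k (z k) = -1 := by
            intro k hk
            obtain ⟨hkW, hkR⟩ := Finset.mem_sdiff.mp hk
            have hzu : z k = u k := by
              have hzk := Fintype.mem_piFinset.mp hz k
              rw [if_pos hkW] at hzk
              rcases Finset.mem_insert.mp hzk with h | h
              · exact h
              · exact absurd (Finset.mem_singleton.mp h)
                  (fun hv' => hkR (Finset.mem_filter.mpr ⟨hkW, hv'⟩))
            rw [hμ k hkW, hzu, Finsupp.sub_apply, Finsupp.single_eq_same,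
              Finsupp.single_eq_of_ne' (ne_of_gt (huv k hkW)), zero_sub]
          rw [Finset.prod_congr rfl hin, Finset.prod_const_one, mul_one,
            Finset.prod_congr rfl hmid, Finset.prod_const, Finset.card_sdiff_of_subset hRW]
        rw [hweight]
        congr 1
        rw [← hzeq]
    · -- inductive step: k0 ∈ S
      have hk0W : k0 ∉ W := Finset.disjoint_left.mp hdisj hk0
      have inner : ∀ N (ρ : ℝ →₀ ℝ), ρ.support.card ≤ N → fmass ρ = 0 →
          ↑ρ.support ⊆ Set.Icc (0:ℝ) 1 → pair (Function.update μ k0 ρ) f = 0 := by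
        intro N
        induction N with
        | zero =>
          intro ρ hcard0 _ _
          have hρ : ρ = 0 := by
            rw [← Finsupp.support_eq_empty]
            exact Finset.card_eq_zero.mp (Nat.le_antisymm hcard0 (Nat.zero_le _))
          exact pair_zero_slot f k0 (by rw [Function.update_self, hρ])
        | succ N ihN =>
          intro ρ hcardρ hmass hsupp
          by_cases hle : ρ.support.card ≤ N
          · exact ihN ρ hle hmass hsupp
          by_cases h1 : ρ.support.card ≤ 1
          · -- card = 1 contradicts zero mass; card = 0 means ρ = 0
            rcases Nat.lt_or_ge ρ.support.card 1 with h0 | h1'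
            · have hρ : ρ = 0 := by
                rw [← Finsupp.support_eq_empty]
                exact Finset.card_eq_zero.mp (by omega)
              exact pair_zero_slot f k0 (by rw [Function.update_self, hρ])
            · exfalso
              obtain ⟨t, ht⟩ := Finset.card_eq_one.mp (Nat.le_antisymm h1 h1')
              have htmem : t ∈ ρ.support := ht ▸ Finset.mem_singleton_self t
              have : fmass ρ = ρ t := by
                show ∑ a ∈ ρ.support, ρ a = ρ t
                rw [ht, Finset.sum_singleton]
              exact Finsupp.mem_support_iff.mp htmem (by rw [← this, hmass])
          · -- at least two support points
            push_neg at h1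
            obtain ⟨a, ha, b, hb, hab⟩ := Finset.one_lt_card.mp h1
            have hexuv : ∃ p q : ℝ, p ∈ ρ.support ∧ q ∈ ρ.support ∧ p < q := by
              rcases lt_or_gt_of_ne hab with h | h
              · exact ⟨a, b, ha, hb, h⟩
              · exact ⟨b, a, hb, ha, h⟩
            obtain ⟨p, q, hps, hqs, hpq⟩ := hexuv
            set rect : ℝ →₀ ℝ := Finsupp.single q 1 - Finsupp.single p 1 with hrect
            set ρ' := ρ - ρ q • rect with hρ'
            have hdecomp : ρ = ρ' + ρ q • rect := by rw [hρ']; abel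
            rw [show Function.update μ k0 ρ
                = Function.update μ k0 (ρ' + ρ q • rect) by rw [← hdecomp]]
            rw [pair_update_add, pair_update_smul]
            have hsub : ρ'.support ⊆ ρ.support.erase q := by
              intro t ht
              have htne : ρ' t ≠ 0 := Finsupp.mem_support_iff.mp ht
              have hρ'q : ρ' q = 0 := by
                rw [hρ', Finsupp.sub_apply, Finsupp.smul_apply, hrect,
                  Finsupp.sub_apply, Finsupp.single_eq_same,
                  Finsupp.single_eq_of_ne' (ne_of_lt hpq)]
                simp
              refine Finset.mem_erase.mpr ⟨fun h => htne (h ▸ hρ'q), ?_⟩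
              by_cases htp : t = p
              · exact htp ▸ hps
              · have htq : t ≠ q := fun h => htne (h ▸ hρ'q)
                refine Finsupp.mem_support_iff.mpr fun h => htne ?_
                rw [hρ', Finsupp.sub_apply, Finsupp.smul_apply, hrect,
                  Finsupp.sub_apply, Finsupp.single_eq_of_ne' (Ne.symm htq),
                  Finsupp.single_eq_of_ne' (Ne.symm htp), h]
                simp
            have hz1 : pair (Function.update μ k0 ρ') f = 0 := by
              refine ihN ρ' ?_ ?_ ?_
              · have := Finset.card_le_card hsub
                have := Finset.card_erase_of_mem hqs
                omega
              · rw [hρ', fmass_sub, fmass_smul, hrect, fmass_sub, fmass_single,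
                  fmass_single, hmass]
                ring
              · refine subset_trans ?_ hsupp
                exact_mod_cast subset_trans hsub (Finset.erase_subset _ _)
            have hz2 : pair (Function.update μ k0 rect) f = 0 := by
              refine ih (S.erase k0) (Finset.erase_ssubset hk0) (insert k0 W) ?_ ?_ _ ?_ ?_ ?_
              · rw [Finset.disjoint_insert_right]
                exact ⟨Finset.notMem_erase k0 S,
                  Finset.disjoint_of_subset_left (Finset.erase_subset _ _) hdisj⟩
              · rw [Finset.card_erase_of_mem hk0, Finset.card_insert_of_notMem hk0W]
                have : 1 ≤ S.card := Finset.card_pos.mpr ⟨k0, hk0⟩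
                omega
              · intro k hk
                have hkne : k ≠ k0 := Finset.ne_of_mem_erase hk
                rw [Function.update_of_ne hkne]
                exact hS k (Finset.mem_of_mem_erase hk)
              · intro k hk
                rcases Finset.mem_insert.mp hk with hkk0 | hkW
                · subst hkk0
                  refine ⟨p, q, ?_, hpq, ?_, by rw [Function.update_self, hrect]⟩
                  · exact (hsupp hps).1
                  · exact (hsupp hqs).2
                · have hkne : k ≠ k0 := fun h => hk0W (h ▸ hkW)
                  rw [Function.update_of_ne hkne]
                  exact hW k hkW
              · intro k hkS' hkW'
                have hkne : k ≠ k0 := fun h => hkW' (h ▸ Finset.mem_insert_self k0 W)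
                have hkS : k ∉ S := fun h => hkS' (Finset.mem_erase.mpr ⟨hkne, h⟩)
                have hkW : k ∉ W := fun h => hkW' (Finset.mem_insert_of_mem h)
                rw [Function.update_of_ne hkne]
                exact hrest k hkS hkW
            rw [hz1, hz2, mul_zero, add_zero]
      have := inner (μ k0).support.card (μ k0) le_rfl (hS k0 hk0).1 (hS k0 hk0).2
      rwa [Function.update_eq_self] at this


def unitCube' (ι : Type*) : Set (ι → ℝ) := Set.univ.pi fun _ => Set.Icc (0 : ℝ) 1

variable {d n : ℕ}

def G (x : Fin n → Fin d → ℝ) (k : Fin d) : Finset ℝ :=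
  insert 0 (Finset.image (fun i => x i k) Finset.univ)

def mm (x : Fin n → Fin d → ℝ) (k : Fin d) : ℕ := (G x k).card - 1

lemma G_card_pos (x : Fin n → Fin d → ℝ) (k : Fin d) : 0 < (G x k).card :=
  Finset.card_pos.mpr ⟨0, Finset.mem_insert_self _ _⟩

lemma G_card (x : Fin n → Fin d → ℝ) (k : Fin d) : (G x k).card = mm x k + 1 := by
  have := G_card_pos x k
  unfold mm
  omega

noncomputable def A (x : Fin n → Fin d → ℝ) (k : Fin d) (j : ℕ) : ℝ :=
  ((G x k).orderIsoOfFin rfl ⟨min j (mm x k), by rw [G_card]; omega⟩ : ℝ)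

lemma A_mem (x : Fin n → Fin d → ℝ) (k : Fin d) (j : ℕ) : A x k j ∈ G x k :=
  ((G x k).orderIsoOfFin rfl _).2

lemma G_nonneg (x : Fin n → Fin d → ℝ) (hx : ∀ i, x i ∈ unitCube' (Fin d)) (k : Fin d)
    {y : ℝ} (hy : y ∈ G x k) : 0 ≤ y := by
  rcases Finset.mem_insert.mp hy with h | h
  · exact h.ge
  · obtain ⟨i, _, rfl⟩ := Finset.mem_image.mp h
    exact (hx i k (Set.mem_univ k)).1

lemma G_le_one (x : Fin n → Fin d → ℝ) (hx : ∀ i, x i ∈ unitCube' (Fin d)) (k : Fin d)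
    {y : ℝ} (hy : y ∈ G x k) : y ≤ 1 := by
  rcases Finset.mem_insert.mp hy with h | h
  · rw [h]; exact zero_le_one
  · obtain ⟨i, _, rfl⟩ := Finset.mem_image.mp h
    exact (hx i k (Set.mem_univ k)).2

lemma A_mono (x : Fin n → Fin d → ℝ) (k : Fin d) {i j : ℕ} (hij : i ≤ j) :
    A x k i ≤ A x k j := by
  unfold A
  have : (⟨min i (mm x k), by rw [G_card]; omega⟩ : Fin (G x k).card)
      ≤ ⟨min j (mm x k), by rw [G_card]; omega⟩ := by
    simp only [Fin.mk_le_mk]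
    omega
  exact_mod_cast ((G x k).orderIsoOfFin rfl).le_iff_le.mpr this

lemma A_strict (x : Fin n → Fin d → ℝ) (k : Fin d) {i j : ℕ} (hij : i < j)
    (hj : j ≤ mm x k) : A x k i < A x k j := by
  unfold A
  have : (⟨min i (mm x k), by rw [G_card]; omega⟩ : Fin (G x k).card)
      < ⟨min j (mm x k), by rw [G_card]; omega⟩ := by
    simp only [Fin.mk_lt_mk]
    omega
  exact_mod_cast ((G x k).orderIsoOfFin rfl).lt_iff_lt.mpr this

lemma A_zero (x : Fin n → Fin d → ℝ) (hx : ∀ i, x i ∈ unitCube' (Fin d)) (k : Fin d) :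
    A x k 0 = 0 := by
  refine le_antisymm ?_ (G_nonneg x hx k (A_mem x k 0))
  -- A x k 0 is the least element of G x k, and 0 ∈ G x k
  have h0 : (0:ℝ) ∈ G x k := Finset.mem_insert_self _ _
  set iso := (G x k).orderIsoOfFin rfl with hiso
  have : A x k 0 ≤ ((⟨0, h0⟩ : {y // y ∈ G x k}) : ℝ) := by
    unfold A
    rw [← hiso]
    have h1 : iso (iso.symm ⟨0, h0⟩) = ⟨0, h0⟩ := iso.apply_symm_apply _
    have h2 : (⟨min 0 (mm x k), by rw [G_card]; omega⟩ : Fin (G x k).card)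
        ≤ iso.symm ⟨0, h0⟩ := by
      simp only [Fin.le_def]
      omega
    calc (iso ⟨min 0 (mm x k), by rw [G_card]; omega⟩ : ℝ)
        ≤ (iso (iso.symm ⟨0, h0⟩) : ℝ) := by
          exact_mod_cast iso.le_iff_le.mpr h2
      _ = ((⟨0, h0⟩ : {y // y ∈ G x k}) : ℝ) := by rw [h1]
  simpa using this

lemma A_nonneg (x : Fin n → Fin d → ℝ) (hx : ∀ i, x i ∈ unitCube' (Fin d)) (k : Fin d)
    (j : ℕ) : 0 ≤ A x k j := G_nonneg x hx k (A_mem x k j)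

lemma A_le_one (x : Fin n → Fin d → ℝ) (hx : ∀ i, x i ∈ unitCube' (Fin d)) (k : Fin d)
    (j : ℕ) : A x k j ≤ 1 := G_le_one x hx k (A_mem x k j)

lemma A_lt_one (x : Fin n → Fin d → ℝ) (hx : ∀ i, x i ∈ unitCube' (Fin d)) (k : Fin d)
    {j : ℕ} (hj : j < mm x k) : A x k j < 1 :=
  lt_of_lt_of_le (A_strict x k hj le_rfl) (A_le_one x hx k (mm x k))

lemma exists_idx (x : Fin n → Fin d → ℝ) (k : Fin d) (i : Fin n) :
    ∃ l, l ≤ mm x k ∧ x i k = A x k l := by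
  have hmem : x i k ∈ G x k :=
    Finset.mem_insert_of_mem (Finset.mem_image.mpr ⟨i, Finset.mem_univ i, rfl⟩)
  set iso := (G x k).orderIsoOfFin rfl with hiso
  set l := iso.symm ⟨x i k, hmem⟩ with hl
  refine ⟨(l : ℕ), ?_, ?_⟩
  · have h1 := l.isLt
    have h2 := G_card x k
    omega
  · have hmin : min (l : ℕ) (mm x k) = (l : ℕ) := by
      have h1 := l.isLt
      have h2 := G_card x k
      omega
  -- A x k l = iso ⟨min l mm, _⟩ = iso l = x i k
    unfold A
    rw [← hiso]
    have : (⟨min (l:ℕ) (mm x k), by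
        have h1 := l.isLt
        have h2 := G_card x k
        omega⟩ : Fin (G x k).card) = l := by
      rw [Fin.ext_iff]
      exact hmin
    rw [this, hl, iso.apply_symm_apply]

noncomputable def dF (x : Fin n → Fin d → ℝ) (k : Fin d) (j : ℕ) : ℝ →₀ ℝ :=
  dd1 (A x k j) (A x k (j+1)) - if j = 0 then 0 else dd1 (A x k (j-1)) (A x k j)

noncomputable def slotF (x : Fin n → Fin d → ℝ) (cc : Fin d → ℕ) (k : Fin d) : ℝ →₀ ℝ :=
  if cc k = mm x k then Finsupp.single 0 1 else dF x k (cc k)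

noncomputable def coefF (x : Fin n → Fin d → ℝ) (w : Fin d → ℝ) (cc : Fin d → ℕ)
    (k : Fin d) : ℝ :=
  if cc k = mm x k then 1 else max (w k - A x k (cc k)) 0

noncomputable def knotF (x : Fin n → Fin d → ℝ) (cc : Fin d → ℕ) : Fin d → ℝ :=
  fun k => if cc k = mm x k then 0 else A x k (cc k)

lemma fmass_dF (x : Fin n → Fin d → ℝ) (k : Fin d) (j : ℕ) : fmass (dF x k j) = 0 := by
  unfold dF
  rw [fmass_sub, fmass_dd1]
  by_cases h : j = 0
  · rw [if_pos h]
    show (0:ℝ) - fmass 0 = 0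
    have : fmass 0 = 0 := by
      show fmass (0 : ℝ →₀ ℝ) = 0
      unfold fmass
      simp
    rw [this, sub_zero]
  · rw [if_neg h, fmass_dd1, sub_zero]

lemma support_dF (x : Fin n → Fin d → ℝ) (hx : ∀ i, x i ∈ unitCube' (Fin d)) (k : Fin d)
    (j : ℕ) : ↑(dF x k j).support ⊆ Set.Icc (0:ℝ) 1 := by
  unfold dF
  intro t ht
  simp only [Finset.coe_subset, Finset.mem_coe] at ht
  have ht' := Finsupp.support_sub (f := dd1 (A x k j) (A x k (j+1)))
    (g := if j = 0 then 0 else dd1 (A x k (j-1)) (A x k j)) ht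
  have hval : ∀ u v : ℕ, t ∈ ({A x k v, A x k u} : Finset ℝ) → t ∈ Set.Icc (0:ℝ) 1 := by
    intro u v htm
    rcases Finset.mem_insert.mp htm with h | h
    · exact h ▸ ⟨A_nonneg x hx k v, A_le_one x hx k v⟩
    · exact (Finset.mem_singleton.mp h) ▸ ⟨A_nonneg x hx k u, A_le_one x hx k u⟩
  rcases Finset.mem_union.mp ht' with h | h
  · exact hval j (j+1) (support_dd1 _ _ h)
  · by_cases h0 : j = 0
    · rw [if_pos h0] at h
      simp at h
    · rw [if_neg h0] at h
      exact hval (j-1) j (support_dd1 _ _ h)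

lemma expandA (x : Fin n → Fin d → ℝ) (hx : ∀ i, x i ∈ unitCube' (Fin d))
    (f : (Fin d → ℝ) → ℝ) (w : Fin d → ℝ) (hw : ∀ k, ∃ l, l ≤ mm x k ∧ w k = A x k l) :
    f w = ∑ cc ∈ Fintype.piFinset (fun k => Finset.range (mm x k + 1)),
      (∏ k, coefF x w cc k) * pair (slotF x cc) f := by
  rw [← pair_single w f]
  have hslot : (fun k => Finsupp.single (w k) (1:ℝ))
      = fun k => ∑ j ∈ Finset.range (mm x k + 1),
        (if j = mm x k then (1:ℝ) else max (w k - A x k j) 0) •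
          (if j = mm x k then Finsupp.single (0:ℝ) (1:ℝ) else dF x k j) := by
    funext k
    obtain ⟨l, hl, hwl⟩ := hw k
    rw [Finset.sum_range_succ, if_pos rfl, if_pos rfl, one_smul]
    have hrest : ∀ j ∈ Finset.range (mm x k),
        (if j = mm x k then (1:ℝ) else max (w k - A x k j) 0) •
          (if j = mm x k then Finsupp.single (0:ℝ) (1:ℝ) else dF x k j)
        = max (w k - A x k j) 0 • dF x k j := by
      intro j hj
      have hne : j ≠ mm x k := by
        have := Finset.mem_range.mp hj
        omega
      rw [if_neg hne, if_neg hne]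
    rw [Finset.sum_congr rfl hrest, hwl]
    rw [oneD (mm x k) l (A x k) hl (fun i j hij _ => A_mono x k hij)
      (fun j hj => A_strict x k (Nat.lt_succ_self j) hj)]
    rw [A_zero x hx k]
    unfold dF
    rw [add_comm]
  rw [hslot, pair_sum]
  refine Finset.sum_congr rfl fun cc _ => ?_
  rw [show (fun k => (if cc k = mm x k then (1:ℝ) else max (w k - A x k (cc k)) 0) •
      (if cc k = mm x k then Finsupp.single (0:ℝ) (1:ℝ) else dF x k (cc k)))
    = fun k => coefF x w cc k • slotF x cc k from rfl]
  rw [pair_smul]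

lemma signB (x : Fin n → Fin d → ℝ) (hx : ∀ i, x i ∈ unitCube' (Fin d))
    (f : (Fin d → ℝ) → ℝ)
    (hf : ∀ p : Fin d → ℕ, (∀ k, p k ≤ 2) → (∃ k, p k = 2) →
      ∀ xs : (k : Fin d) → Fin (p k + 1) → ℝ,
        (∀ k, StrictMono (xs k)) → (∀ k j, xs k j ∈ Set.Icc (0 : ℝ) 1) →
        mvDivDiff f p xs ≤ 0)
    (cc : Fin d → ℕ) (hcc : ∀ k, cc k ≤ mm x k)
    (hex : ∃ k, cc k ≠ mm x k ∧ cc k ≠ 0) :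
    pair (slotF x cc) f ≤ 0 := by
  classical
  set p : Fin d → ℕ := fun k =>
    if cc k = mm x k then 0 else if cc k = 0 then 1 else 2 with hp
  set xs : (k : Fin d) → Fin (p k + 1) → ℝ := fun k i =>
    if cc k = mm x k then 0 else A x k (cc k - 1 + (i : ℕ)) with hxs
  set scale : Fin d → ℝ := fun k =>
    if cc k = mm x k then 1 else if cc k = 0 then 1
      else A x k (cc k + 1) - A x k (cc k - 1) with hscale
  have hple : ∀ k, p k ≤ 2 := by
    intro k
    simp only [hp]
    split <;> [omega; skip]
    split <;> omega
  have hpex : ∃ k, p k = 2 := by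
    obtain ⟨k, h1, h2⟩ := hex
    exact ⟨k, by simp only [hp, if_neg h1, if_neg h2]⟩
  have hbridge : ∀ k, slotF x cc k = scale k • ddFun (p k) (xs k) := by
    intro k
    by_cases h0 : cc k = mm x k
    · rw [show slotF x cc k = Finsupp.single 0 1 from if_pos h0,
        show scale k = 1 from if_pos h0, one_smul]
      exact (helper0 (p k) (by simp only [hp, if_pos h0]) (xs k)
        (fun i => by simp only [hxs, if_pos h0])).symm
    by_cases h1 : cc k = 0
    · rw [show slotF x cc k = dF x k (cc k) from if_neg h0,
        show scale k = 1 by simp only [hscale, if_neg h0, if_pos h1], one_smul]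
      rw [show dF x k (cc k) = dd1 (A x k 0) (A x k 1) by
        unfold dF; rw [h1, if_pos rfl, sub_zero]]
      refine (helper1 (p k) (by simp only [hp, if_neg h0, if_pos h1]) (xs k)
        (A x k 0) (A x k 1) ?_ ?_).symm
      · simp only [hxs, if_neg h0, h1]
      · simp only [hxs, if_neg h0, h1]
    · rw [show slotF x cc k = dF x k (cc k) from if_neg h0,
        show scale k = A x k (cc k + 1) - A x k (cc k - 1) by
          simp only [hscale, if_neg h0, if_neg h1]]
      have hcck : 1 ≤ cc k := Nat.one_le_iff_ne_zero.mpr h1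
      have hlt : cc k < mm x k := lt_of_le_of_ne (hcc k) h0
      rw [show dF x k (cc k)
          = dd1 (A x k (cc k)) (A x k (cc k + 1)) - dd1 (A x k (cc k - 1)) (A x k (cc k)) by
        unfold dF; rw [if_neg h1]]
      refine (helper2 (p k) (by simp only [hp, if_neg h0, if_neg h1]) (xs k)
        (A x k (cc k - 1)) (A x k (cc k)) (A x k (cc k + 1)) ?_ ?_ ?_ ?_ ?_).symm
      · simp only [hxs, if_neg h0]
        norm_num
      · simp only [hxs, if_neg h0]
        congr 1
        omega
      · simp only [hxs, if_neg h0]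
        congr 1
        omega
      · exact A_strict x k (by omega) (by omega)
      · exact A_strict x k (by omega) (by omega)
  have hmonos : ∀ k, StrictMono (xs k) := by
    intro k i j hij
    have hij' : (i : ℕ) < (j : ℕ) := hij
    have hjlt : (j : ℕ) < p k + 1 := j.isLt
    by_cases h0 : cc k = mm x k
    · exfalso
      have : p k = 0 := by simp only [hp, if_pos h0]
      omega
    · simp only [hxs, if_neg h0]
      by_cases h1 : cc k = 0
      · have hpk : p k = 1 := by simp only [hp, if_neg h0, if_pos h1]
        have hm1 : 1 ≤ mm x k := by
          have := hcc k
          omega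
        refine A_strict x k (by omega) (by omega)
      · have hpk : p k = 2 := by simp only [hp, if_neg h0, if_neg h1]
        have hlt : cc k < mm x k := lt_of_le_of_ne (hcc k) h0
        refine A_strict x k (by omega) (by omega)
  have hbounds : ∀ k j, xs k j ∈ Set.Icc (0:ℝ) 1 := by
    intro k j
    by_cases h0 : cc k = mm x k
    · simp only [hxs, if_pos h0]
      exact ⟨le_refl 0, zero_le_one⟩
    · simp only [hxs, if_neg h0]
      exact ⟨A_nonneg x hx k _, A_le_one x hx k _⟩
  have heq : pair (slotF x cc) f = (∏ k, scale k) * mvDivDiff f p xs := by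
    rw [show slotF x cc = fun k => scale k • ddFun (p k) (xs k) from funext hbridge]
    rw [pair_smul, pair_ddFun f p xs (fun k => (hmonos k).injective)]
  rw [heq]
  refine mul_nonpos_of_nonneg_of_nonpos ?_ (hf p hple hpex xs hmonos hbounds)
  refine Finset.prod_nonneg fun k _ => ?_
  by_cases h0 : cc k = mm x k
  · rw [show scale k = 1 from if_pos h0]; norm_num
  by_cases h1 : cc k = 0
  · rw [show scale k = 1 by simp only [hscale, if_neg h0, if_pos h1]]; norm_num
  · rw [show scale k = A x k (cc k + 1) - A x k (cc k - 1) by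
      simp only [hscale, if_neg h0, if_neg h1]]
    have hlt : cc k < mm x k := lt_of_le_of_ne (hcc k) h0
    have := A_strict x k (show cc k - 1 < cc k + 1 by omega) (by omega)
    linarith

lemma integrable_dirac' {f : (Fin d → ℝ) → ℝ} (hf : Measurable f) (a : Fin d → ℝ) :
    MeasureTheory.Integrable f (MeasureTheory.Measure.dirac a) := by
  refine ⟨hf.aestronglyMeasurable, ?_⟩
  show (∫⁻ b, ‖f b‖₊ ∂(MeasureTheory.Measure.dirac a)) < ⊤
  rw [MeasureTheory.lintegral_dirac]
  exact ENNReal.coe_lt_top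

lemma integral_hinge (S : Finset (Fin d)) (K : Finset (Fin d → ℕ)) (c : (Fin d → ℕ) → ℝ)
    (hc : ∀ cc ∈ K, 0 ≤ c cc) (knot : (Fin d → ℕ) → (Fin d → ℝ)) (w : Fin d → ℝ) :
    ∫ t, (∏ j ∈ S, max (w j - t j) 0)
        ∂(∑ cc ∈ K, (ENNReal.ofReal (c cc)) • MeasureTheory.Measure.dirac (knot cc))
      = ∑ cc ∈ K, c cc * ∏ j ∈ S, max (w j - knot cc j) 0 := by
  have hmeas : Measurable fun t : Fin d → ℝ => ∏ j ∈ S, max (w j - t j) 0 := by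
    refine Finset.measurable_prod _ fun j _ => ?_
    exact (measurable_const.sub (measurable_pi_apply j)).max measurable_const
  rw [MeasureTheory.integral_finset_sum_measure (fun cc _ =>
    (integrable_dirac' hmeas (knot cc)).smul_measure ENNReal.ofReal_ne_top)]
  refine Finset.sum_congr rfl fun cc hcc => ?_
  rw [MeasureTheory.integral_smul_measure,
    MeasureTheory.integral_dirac' _ _ hmeas.stronglyMeasurable,
    ENNReal.toReal_ofReal (hc cc hcc), smul_eq_mul]

end TCAux

open TCAux

/-- **Lemma (interpolation by totally concave functions).**
If `f ∈ F^d_TCP` satisfies the interaction restriction condition of order `s`, then there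
exists `g ∈ F^{d,s}_TC` agreeing with `f` at all the design points. -/
theorem exists_tc_interpolant (d s n : ℕ) (hs1 : 1 ≤ s) (hsd : s ≤ d)
    (x : Fin n → Fin d → ℝ) (hx : ∀ i, x i ∈ unitCube (Fin d))
    (f : (Fin d → ℝ) → ℝ) (hf : MemTCP d f) (hir : InteractionRestriction d s f) :
    ∃ g : (Fin d → ℝ) → ℝ, MemTC d s g ∧ ∀ i, g (x i) = f (x i) := by
  classical
  have hx' : ∀ i, x i ∈ TCAux.unitCube' (Fin d) := hx
  set P : Finset (Fin d → ℕ) := Fintype.piFinset (fun k => Finset.range (mm x k + 1)) with hP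
  set Sof : (Fin d → ℕ) → Finset (Fin d) :=
    (fun cc => Finset.univ.filter fun k => cc k ≠ mm x k) with hSof
  set val : (Fin d → ℕ) → ℝ := (fun cc => pair (slotF x cc) f) with hval
  set KB : Finset (Fin d) → Finset (Fin d → ℕ) :=
    (fun S => P.filter fun cc => Sof cc = S ∧ ∀ k ∈ S, cc k = 0) with hKB
  set KN : Finset (Fin d) → Finset (Fin d → ℕ) :=
    (fun S => P.filter fun cc => Sof cc = S ∧ ¬(∀ k ∈ S, cc k = 0)) with hKN
  have hccP : ∀ cc ∈ P, ∀ k, cc k ≤ mm x k := by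
    intro cc hcc k
    have := Fintype.mem_piFinset.mp hcc k
    rw [Finset.mem_range] at this
    omega
  have hSmem : ∀ (cc : Fin d → ℕ) (S : Finset (Fin d)), Sof cc = S →
      ∀ k, (k ∈ S ↔ cc k ≠ mm x k) := by
    intro cc S hS k
    rw [← hS, hSof]
    simp
  -- the sign condition on the ν-part coefficients
  have hsign : ∀ S : Finset (Fin d), ∀ cc ∈ KN S, 0 ≤ -(val cc) := by
    intro S cc hcc
    rw [hKN] at hcc
    obtain ⟨hccP', hS, hnz⟩ := Finset.mem_filter.mp hcc
    rw [neg_nonneg, hval]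
    push_neg at hnz
    obtain ⟨k, hkS, hk0⟩ := hnz
    refine signB x hx' f hf cc (hccP cc hccP') ⟨k, ?_, hk0⟩
    exact (hSmem cc S hS k).mp hkS
  -- the measures
  set ν : Finset (Fin d) → MeasureTheory.Measure (Fin d → ℝ) :=
    (fun S => ∑ cc ∈ KN S, (ENNReal.ofReal (-(val cc))) •
      MeasureTheory.Measure.dirac (knotF x cc)) with hν
  have hknot_mem : ∀ S : Finset (Fin d), ∀ cc ∈ KN S, knotF x cc ∈ tcSupport d S := by
    intro S cc hcc
    rw [hKN] at hcc
    obtain ⟨hccP', hS, hnz⟩ := Finset.mem_filter.mp hcc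
    constructor
    · intro j hj
      have hne : cc j ≠ mm x j := (hSmem cc S hS j).mp hj
      have hlt : cc j < mm x j := lt_of_le_of_ne (hccP cc hccP' j) hne
      rw [knotF, if_neg hne]
      exact ⟨A_nonneg x hx' j _, A_lt_one x hx' j hlt⟩
    · push_neg at hnz
      obtain ⟨k, hkS, hk0⟩ := hnz
      have hne : cc k ≠ mm x k := (hSmem cc S hS k).mp hkS
      refine ⟨k, hkS, ?_⟩
      rw [knotF, if_neg hne]
      have : A x k 0 < A x k (cc k) :=
        A_strict x k (Nat.pos_of_ne_zero hk0) (hccP cc hccP' k)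
      rw [A_zero x hx' k] at this
      exact ne_of_gt this
  have hfin : ∀ S, MeasureTheory.IsFiniteMeasure (ν S) := by
    intro S
    refine ⟨?_⟩
    rw [hν]
    rw [MeasureTheory.Measure.finset_sum_apply]
    refine ENNReal.sum_lt_top.mpr fun cc _ => ?_
    rw [MeasureTheory.Measure.smul_apply, smul_eq_mul]
    exact ENNReal.mul_lt_top ENNReal.ofReal_lt_top (by simp)
  have hsupp : ∀ S, ν S (tcSupport d S)ᶜ = 0 := by
    intro S
    rw [hν, MeasureTheory.Measure.finset_sum_apply]
    refine Finset.sum_eq_zero fun cc hcc => ?_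
    rw [MeasureTheory.Measure.smul_apply]
    have h2 : MeasureTheory.Measure.dirac (knotF x cc) ({knotF x cc}ᶜ) = 0 := by
      rw [MeasureTheory.Measure.dirac_apply' _ (measurableSet_singleton _).compl]
      simp
    have h1 : MeasureTheory.Measure.dirac (knotF x cc) ((tcSupport d S)ᶜ) = 0 :=
      MeasureTheory.measure_mono_null (Set.compl_subset_compl.mpr
        (Set.singleton_subset_iff.mpr (hknot_mem S cc hcc))) h2
    rw [h1, smul_zero]
  set βf : Finset (Fin d) → ℝ := (fun S => ∑ cc ∈ KB S, val cc) with hβf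
  set β0 : ℝ := pair (fun _ => Finsupp.single 0 1) f with hβ0
  set r : TCRep d := ⟨β0, βf, ν, hfin, hsupp⟩ with hr
  refine ⟨r.toFun s, ⟨r, fun _ _ => rfl⟩, ?_⟩
  intro i
  set w : Fin d → ℝ := x i with hw
  have hwgrid : ∀ k, ∃ l, l ≤ mm x k ∧ w k = A x k l := fun k => exists_idx x k i
  have hw0 : ∀ k, 0 ≤ w k := fun k => (hx i k (Set.mem_univ k)).1
  set F : Finset (Fin d) → ℝ :=
    (fun S => ∑ cc ∈ P.filter (fun cc => Sof cc = S), (∏ k, coefF x w cc k) * val cc) with hF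
  have e1 : f w = ∑ cc ∈ P, (∏ k, coefF x w cc k) * val cc := expandA x hx' f w hwgrid
  have e2 : ∑ cc ∈ P, (∏ k, coefF x w cc k) * val cc = ∑ S ∈ Finset.univ, F S :=
    (Finset.sum_fiberwise_of_maps_to (fun cc _ => Finset.mem_univ (Sof cc)) _).symm
  have e3 : ∑ S ∈ Finset.univ, F S
      = ∑ S ∈ Finset.univ.filter (fun S => S ∈ smallSets d s), F S
        + ∑ S ∈ Finset.univ.filter (fun S => S ∉ smallSets d s), F S :=
    (Finset.sum_filter_add_sum_filter_not _ _ _).symm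
  have hfilter : Finset.univ.filter (fun S => S ∈ smallSets d s) = smallSets d s := by
    ext S
    simp [smallSets]
  -- the non-small part contributes β0
  have hBpart : ∑ S ∈ Finset.univ.filter (fun S => S ∉ smallSets d s), F S = β0 := by
    have hmem0 : ∅ ∈ Finset.univ.filter (fun S : Finset (Fin d) => S ∉ smallSets d s) := by
      refine Finset.mem_filter.mpr ⟨Finset.mem_univ _, ?_⟩
      simp [smallSets]
    have hzero : ∀ S ∈ Finset.univ.filter (fun S : Finset (Fin d) => S ∉ smallSets d s),
        S ≠ ∅ → F S = 0 := by
      intro S hS hSne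
      have hcard : s < S.card := by
        have h1 : S ∉ smallSets d s := (Finset.mem_filter.mp hS).2
        have h2 : 0 < S.card := Finset.card_pos.mpr (Finset.nonempty_of_ne_empty hSne)
        rw [smallSets, Finset.mem_filter] at h1
        push_neg at h1
        have := h1 (Finset.mem_univ S)
        omega
      rw [hF]
      refine Finset.sum_eq_zero fun cc hcc => ?_
      obtain ⟨hccP', hSof⟩ := Finset.mem_filter.mp hcc
      have hz : val cc = 0 := by
        rw [hval]
        refine vanish f hir S ∅ (Finset.disjoint_empty_right S)
          (by rw [Finset.card_empty]; omega) (slotF x cc) ?_ ?_ ?_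
        · intro k hk
          have hne : cc k ≠ mm x k := (hSmem cc S hSof k).mp hk
          rw [slotF, if_neg hne]
          exact ⟨fmass_dF x k (cc k), support_dF x hx' k (cc k)⟩
        · intro k hk
          exact absurd hk (Finset.notMem_empty k)
        · intro k hkS _
          have : cc k = mm x k := by
            by_contra hne
            exact hkS ((hSmem cc S hSof k).mpr hne)
          rw [slotF, if_pos this]
      rw [hz, mul_zero]
    have hFempty : F ∅ = β0 := by
      have hone : P.filter (fun cc => Sof cc = ∅) = {fun k => mm x k} := by
        ext cc
        rw [Finset.mem_filter, Finset.mem_singleton]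
        constructor
        · rintro ⟨-, hS⟩
          funext k
          by_contra hne
          have : k ∈ Sof cc := by
            rw [hSof]
            simp [hne]
          rw [hS] at this
          exact Finset.notMem_empty k this
        · rintro rfl
          refine ⟨Fintype.mem_piFinset.mpr fun k => Finset.mem_range.mpr (by omega), ?_⟩
          rw [hSof]
          simp
      rw [hF]
      simp only []
      rw [hone, Finset.sum_singleton]
      have hcoef : (∏ k, coefF x w (fun k' => mm x k') k) = 1 := by
        refine Finset.prod_eq_one fun k _ => ?_
        rw [coefF, if_pos rfl]
      have hslot : slotF x (fun k' => mm x k') = fun _ => Finsupp.single 0 1 := by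
        funext k
        rw [slotF, if_pos rfl]
      rw [hcoef, one_mul, hval]
      simp only []
      rw [hslot, hβ0]
    rw [Finset.sum_eq_single_of_mem ∅ hmem0 hzero]
    exact hFempty
  -- the small part
  have hApart : ∀ S ∈ smallSets d s, F S
      = βf S * (∏ j ∈ S, w j)
        - ∑ cc ∈ KN S, (-(val cc)) * ∏ j ∈ S, max (w j - knotF x cc j) 0 := by
    intro S hSmall
    rw [hF]
    simp only []
    rw [← Finset.sum_filter_add_sum_filter_not (P.filter (fun cc => Sof cc = S))
      (fun cc => ∀ k ∈ S, cc k = 0), Finset.filter_filter, Finset.filter_filter]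
    have hKBpart : ∑ cc ∈ P.filter (fun cc => Sof cc = S ∧ ∀ k ∈ S, cc k = 0),
        (∏ k, coefF x w cc k) * val cc = βf S * (∏ j ∈ S, w j) := by
      have hcoefB : ∀ cc ∈ P.filter (fun cc => Sof cc = S ∧ ∀ k ∈ S, cc k = 0),
          (∏ k, coefF x w cc k) = ∏ j ∈ S, w j := by
        intro cc hcc
        have h := Finset.mem_filter.mp hcc
        have hSof := h.2.1
        have hzero := h.2.2
        rw [← Finset.prod_mul_prod_compl S (fun k => coefF x w cc k)]
        have hS1 : ∀ k ∈ S, coefF x w cc k = w k := by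
          intro k hk
          have hne : cc k ≠ mm x k := (hSmem cc S hSof k).mp hk
          rw [coefF, if_neg hne, hzero k hk, A_zero x hx' k, sub_zero]
          exact max_eq_left (hw0 k)
        have hS2 : ∀ k ∈ Sᶜ, coefF x w cc k = 1 := by
          intro k hk
          have hkS : k ∉ S := Finset.mem_compl.mp hk
          have heq : cc k = mm x k := by
            by_contra hne
            exact hkS ((hSmem cc S hSof k).mpr hne)
          rw [coefF, if_pos heq]
        rw [Finset.prod_congr rfl hS1, Finset.prod_congr rfl hS2,
          Finset.prod_const_one, mul_one]
      rw [Finset.sum_congr rfl (fun cc hcc => by rw [hcoefB cc hcc])]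
      rw [← Finset.mul_sum, mul_comm]
    have hKNpart : ∑ cc ∈ P.filter (fun cc => Sof cc = S ∧ ¬∀ k ∈ S, cc k = 0),
        (∏ k, coefF x w cc k) * val cc
        = -∑ cc ∈ KN S, (-(val cc)) * ∏ j ∈ S, max (w j - knotF x cc j) 0 := by
      have hcoefN : ∀ cc ∈ P.filter (fun cc => Sof cc = S ∧ ¬∀ k ∈ S, cc k = 0),
          (∏ k, coefF x w cc k) = ∏ j ∈ S, max (w j - knotF x cc j) 0 := by
        intro cc hcc
        have h := Finset.mem_filter.mp hcc
        have hSof := h.2.1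
        rw [← Finset.prod_mul_prod_compl S (fun k => coefF x w cc k)]
        have hS1 : ∀ k ∈ S, coefF x w cc k = max (w k - knotF x cc k) 0 := by
          intro k hk
          have hne : cc k ≠ mm x k := (hSmem cc S hSof k).mp hk
          rw [coefF, if_neg hne, knotF, if_neg hne]
        have hS2 : ∀ k ∈ Sᶜ, coefF x w cc k = 1 := by
          intro k hk
          have hkS : k ∉ S := Finset.mem_compl.mp hk
          have heq : cc k = mm x k := by
            by_contra hne
            exact hkS ((hSmem cc S hSof k).mpr hne)
          rw [coefF, if_pos heq]
        rw [Finset.prod_congr rfl hS1, Finset.prod_congr rfl hS2,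
          Finset.prod_const_one, mul_one]
      rw [Finset.sum_congr rfl (fun cc hcc => by rw [hcoefN cc hcc])]
      rw [← Finset.sum_neg_distrib]
      refine Finset.sum_congr rfl fun cc hcc => ?_
      ring
    rw [hKBpart, hKNpart]
    ring
  have htotal : f w = β0 + (∑ S ∈ smallSets d s, βf S * ∏ j ∈ S, w j)
      - ∑ S ∈ smallSets d s, ∑ cc ∈ KN S,
          (-(val cc)) * ∏ j ∈ S, max (w j - knotF x cc j) 0 := by
    rw [e1, e2, e3, hfilter, hBpart]
    rw [Finset.sum_congr rfl hApart]
    rw [Finset.sum_sub_distrib]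
    ring
  have hint : ∀ S ∈ smallSets d s,
      ∫ t, (∏ j ∈ S, max (w j - t j) 0) ∂(ν S)
        = ∑ cc ∈ KN S, (-(val cc)) * ∏ j ∈ S, max (w j - knotF x cc j) 0 := by
    intro S _
    exact integral_hinge S (KN S) (fun cc => -(val cc)) (hsign S) (knotF x) w
  show r.toFun s w = f w
  rw [show r.toFun s w = β0 + (∑ S ∈ smallSets d s, βf S * ∏ j ∈ S, w j)
      - ∑ S ∈ smallSets d s, ∫ t, (∏ j ∈ S, max (w j - t j) 0) ∂(ν S) from rfl]
  rw [htotal, Finset.sum_congr rfl hint]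

end
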